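/- arXiv:1603.03887 — 2 statements merged into one kernel-verified Lean document; each statement's English description precedes it below -/
import Mathlib

section
/- Let (U_n)_{n∈ℕ} be pairwise disjoint subsets of ℝ² with diam(U_n) → 0 as n → ∞, and let f_n : ℝ² → ℝ² be continuous maps such that f_n is the identity on ℝ² ∖ U_n and f_n(U_n) ⊆ U_n for every n. Then the sequence F_n := f_n ∘ f_{n-1} ∘ … ∘ f_1 is uniformly Cauchy, i.e., sup_{x∈ℝ²} d(F_m(x), F_n(x)) → 0 as n, m → ∞; consequently (F_n) converges uniformly to a continuous map F : ℝ² → ℝ². -/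
/-- Let `(U n)` be pairwise disjoint subsets of the plane with `diam (U n) → 0`, and let
`f n : ℝ² → ℝ²` be continuous maps which are the identity outside `U n` and map `U n`
into itself. Then the compositions `F n = f (n-1) ∘ … ∘ f 0` form a uniformly Cauchy
sequence, and hence converge uniformly to a continuous map `G : ℝ² → ℝ²`. -/
theorem stmt16 (U : ℕ → Set (ℝ × ℝ)) (hdisj : Pairwise (Function.onFun Disjoint U))
    (hdiam : Filter.Tendsto (fun n => EMetric.diam (U n)) Filter.atTop (nhds 0))
    (f : ℕ → ℝ × ℝ → ℝ × ℝ) (hfc : ∀ n, Continuous (f n))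
    (hfid : ∀ n, ∀ x ∉ U n, f n x = x)
    (hfmap : ∀ n, Set.MapsTo (f n) (U n) (U n))
    (F : ℕ → ℝ × ℝ → ℝ × ℝ) (hF0 : F 0 = id) (hFs : ∀ n, F (n + 1) = f n ∘ F n) :
    (∀ ε : ℝ, 0 < ε → ∃ N : ℕ, ∀ m ≥ N, ∀ n ≥ N, ∀ x : ℝ × ℝ, dist (F m x) (F n x) ≤ ε) ∧
    ∃ G : ℝ × ℝ → ℝ × ℝ, Continuous G ∧ TendstoUniformly F G Filter.atTop := by
  have hFc : ∀ n, Continuous (F n) := by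
    intro n
    induction n with
    | zero => rw [hF0]; exact continuous_id
    | succ n ih => rw [hFs]; exact (hfc n).comp ih
  -- once the orbit enters `U k`, it freezes after one more step
  have hfreeze : ∀ x k j, k + 1 ≤ j → F k x ∈ U k → F j x = F (k + 1) x := by
    intro x k j hj hk
    induction j with
    | zero => omega
    | succ j ih =>
      rcases Nat.lt_or_ge (k + 1) (j + 1) with h | h
      · have hj' : k + 1 ≤ j := by omega
        have hje := ih hj'
        have hmem : F j x ∈ U k := by
          rw [hje, hFs]; exact hfmap k hk
        have hnot : F j x ∉ U j := by
          intro hmem'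
          exact (hdisj (show k ≠ j by omega)).le_bot ⟨hmem, hmem'⟩
        rw [hFs]
        simp only [Function.comp_apply]
        rw [hfid j _ hnot, hje]
      · have : j = k := by omega
        subst this; rfl
  -- structure of the orbit between times `n` and `m`
  have key : ∀ x n m, n ≤ m →
      F m x = F n x ∨ ∃ k, n ≤ k ∧ k < m ∧ F k x ∈ U k ∧ F n x = F k x ∧ F m x = F (k + 1) x := by
    intro x n m hm
    induction m, hm using Nat.le_induction with
    | base => exact Or.inl rfl
    | succ m hm ih =>
      rcases ih with h | ⟨k, hk, hkm, hkU, h1, h2⟩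
      · by_cases hmem : F m x ∈ U m
        · exact Or.inr ⟨m, hm, by omega, hmem, h.symm, rfl⟩
        · left
          rw [hFs]
          simp only [Function.comp_apply]
          rw [hfid m _ hmem, h]
      · exact Or.inr ⟨k, hk, by omega, hkU, h1, hfreeze x k (m + 1) (by omega) hkU⟩
  have main : ∀ ε : ℝ, 0 < ε → ∃ N : ℕ, ∀ m ≥ N, ∀ n ≥ N, ∀ x : ℝ × ℝ,
      dist (F m x) (F n x) ≤ ε := by
    intro ε hε
    obtain ⟨N, hN⟩ := Filter.eventually_atTop.mp
      (hdiam.eventually (gt_mem_nhds (ENNReal.ofReal_pos.mpr hε)))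
    refine ⟨N, ?_⟩
    have hbound : ∀ n ≥ N, ∀ m, n ≤ m → ∀ x, dist (F m x) (F n x) ≤ ε := by
      intro n hn m hm x
      rcases key x n m hm with h | ⟨k, hk, _, hkU, h1, h2⟩
      · rw [h]; simp [hε.le]
      · rw [h1, h2]
        have hk1 : F (k + 1) x ∈ U k := by rw [hFs]; exact hfmap k hkU
        have hd : edist (F (k + 1) x) (F k x) ≤ ENNReal.ofReal ε :=
          (EMetric.edist_le_diam_of_mem hk1 hkU).trans (hN k (le_trans hn hk)).le
        rwa [edist_le_ofReal hε.le] at hd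
    intro m hm n hn x
    rcases le_total n m with h | h
    · exact hbound n hn m h x
    · rw [dist_comm]; exact hbound m hm n h x
  refine ⟨main, ?_⟩
  have hcauchy : UniformCauchySeqOn F Filter.atTop Set.univ := by
    rw [Metric.uniformCauchySeqOn_iff]
    intro ε hε
    obtain ⟨N, hN⟩ := main (ε / 2) (by linarith)
    exact ⟨N, fun m hm n hn x _ => lt_of_le_of_lt (hN m hm n hn x) (by linarith)⟩
  have hptw : ∀ x : ℝ × ℝ, ∃ y, Filter.Tendsto (fun n => F n x) Filter.atTop (nhds y) := by
    intro x
    apply cauchySeq_tendsto_of_complete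
    rw [Metric.cauchySeq_iff]
    intro ε hε
    obtain ⟨N, hN⟩ := main (ε / 2) (by linarith)
    exact ⟨N, fun m hm n hn => lt_of_le_of_lt (hN m hm n hn x) (by linarith)⟩
  choose G hG using hptw
  have htu : TendstoUniformly F G Filter.atTop := by
    rw [← tendstoUniformlyOn_univ]
    exact hcauchy.tendstoUniformlyOn_of_tendsto (fun x _ => hG x)
  exact ⟨G, htu.continuous (Filter.Eventually.of_forall hFc).frequently, htu⟩
end

section
/- The map φ : X → Y/∼ is a homeomorphism, where Y = φ(X) ⊂ [0,1] × ℝ carries the Euclidean topology and Y/∼ the quotient topology. -/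
/-- `T : ℝ → ℝ` is a unimodal map on `[0,1]` with critical point `c`. -/
def IsUnimodal (T : ℝ → ℝ) (c : ℝ) : Prop :=
  ContinuousOn T (Set.Icc 0 1) ∧ Set.MapsTo T (Set.Icc 0 1) (Set.Icc 0 1) ∧
    T 0 = 0 ∧ 0 < c ∧ c < 1 ∧
    StrictMonoOn T (Set.Icc 0 c) ∧ StrictAntiOn T (Set.Icc c 1)

-- Symbols `0, *, 1` are encoded as `(0 : Fin 3), (1 : Fin 3), (2 : Fin 3)`
-- respectively; this realizes the order `0 < * < 1`.
open Classical in
/-- The raw (unmodified) itinerary of `x`: the `n`-th symbol is `0` if `Tⁿ(x) < c`,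
`*` if `Tⁿ(x) = c` and `1` if `Tⁿ(x) > c`. -/
noncomputable def rawItin (T : ℝ → ℝ) (c : ℝ) (x : ℝ) : ℕ → Fin 3 := fun n =>
  if T^[n] x < c then 0 else if T^[n] x = c then 1 else 2

/-- The number of `1`s among the first `k` symbols of `s`. -/
def onesCount (s : ℕ → Fin 3) (k : ℕ) : ℕ :=
  ((Finset.range k).filter fun i => s i = 2).card

/-- The (strict) parity-lexicographical ordering on `{0,*,1}^ℕ`. -/
def PlexLt (s t : ℕ → Fin 3) : Prop :=
  ∃ k : ℕ, (∀ i < k, s i = t i) ∧ s k ≠ t k ∧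
    ((s k < t k ∧ Even (onesCount s k)) ∨ (t k < s k ∧ Odd (onesCount s k)))

/-- The parity-lexicographical ordering `⪯`. -/
def PlexLe (s t : ℕ → Fin 3) : Prop := PlexLt s t ∨ s = t

open Classical in
/-- The (modified) kneading sequence `ν = c₁c₂… = I(T(c))`: if the critical point is
periodic, so that the raw itinerary of `T(c)` contains `*` (first at index `n-1`, whence it
is `(c₁…c_{n-1}*)^∞`), then `ν` is the parity-lexicographically smaller of
`(c₁…c_{n-1}0)^∞` and `(c₁…c_{n-1}1)^∞`. -/
noncomputable def kneading (T : ℝ → ℝ) (c : ℝ) : ℕ → Fin 3 :=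
  if h : ∃ i, rawItin T c (T c) i = 1 then
    let n := Nat.find h + 1
    let w : Fin 3 → ℕ → Fin 3 := fun b j =>
      if j % n = n - 1 then b else rawItin T c (T c) (j % n)
    if PlexLe (w 0) (w 2) then w 0 else w 2
  else rawItin T c (T c)

open Classical in
/-- The modified itinerary of `x`: it agrees with the raw itinerary up to the first
occurrence of `*` (if any), and after that first `*` it continues with the modified
kneading sequence `ν`. -/
noncomputable def itin (T : ℝ → ℝ) (c : ℝ) (x : ℝ) : ℕ → Fin 3 :=
  if h : ∃ i, T^[i] x = c then
    fun n =>
      if n < Nat.find h then rawItin T c x n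
      else if n = Nat.find h then 1
      else kneading T c (n - Nat.find h - 1)
  else rawItin T c x


/-- The inverse limit `X = lim←([0,1], T)`, modelled as sequences
`x : ℕ → ℝ` where `x n` represents the coordinate `x_{-n}`. -/
def invLimitSet (T : ℝ → ℝ) : Set (ℕ → ℝ) :=
  {x | (∀ n, x n ∈ Set.Icc (0 : ℝ) 1) ∧ ∀ n, T (x (n + 1)) = x n}

/-- `#_1(s_{-k}…s_{-1})`: the number of `1`s among the first `k` entries (from the
right) of a left-infinite sequence `s ∈ {0,1}^{-ℕ}`, modelled as `s : ℕ → Bool` with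
`s i` representing `s_{-(i+1)}`. -/
def numOnes (s : ℕ → Bool) (k : ℕ) : ℕ :=
  ((Finset.range k).filter fun i => s i = true).card

/-- The map `ψ_L : {0,1}^{-ℕ} → ℝ`,
`ψ_L(s) = 1/2 + Σ_{i=1}^∞ (-1)^{#_1(l_{-i}…l_{-1}) - #_1(s_{-i}…s_{-1})} · 3^{-i}`. -/
noncomputable def psiL (L : ℕ → Bool) (s : ℕ → Bool) : ℝ :=
  1 / 2 + ∑' i : ℕ,
    (-1 : ℝ) ^ ((numOnes L (i + 1) : ℤ) - (numOnes s (i + 1) : ℤ)) * (3 : ℝ) ^ (-(i + 1 : ℤ))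

/-- Conversion of a symbol in `{0,*,1}` to a Boolean (`1 ↦ true`, otherwise `false`);
it is only ever applied to entries of the modified kneading sequence, which contains
no `*`. -/
def f2b (v : Fin 3) : Bool := v == 2

open Classical in
/-- `φ(x)`: the point (or pair of points) of `[0,1] × ℝ` assigned to `x ∈ X`.
Writing `s_{-(i+1)} = ν_{-(i+1)}(x)` for the modified itinerary of the left tail of
`x`: if no coordinate `x_{-(i+1)}` equals `c`, then `φ(x)` is the single point
`(x₀, ψ_L(s))`; if some (but finitely many) coordinates equal `c`, the modified
itinerary has a single `*` (at the deepest such index), the entries following the `*`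
are those of the kneading sequence `ν`, and `φ(x)` is the pair of points obtained by
replacing the `*` by `0` and by `1`; if infinitely many coordinates equal `c` (the
fully periodic case `(c₁…c_{n-1}*)^ℤ`), the itinerary is replaced by the single
modified periodic itinerary `(c₁…c_n)^ℤ`. -/
noncomputable def phiSet (T : ℝ → ℝ) (c : ℝ) (L : ℕ → Bool) (x : ℕ → ℝ) :
    Set (ℝ × ℝ) :=
  if hP : {i : ℕ | x (i + 1) = c}.Finite ∧ {i : ℕ | x (i + 1) = c}.Nonempty then
    let imax : ℕ := hP.1.toFinset.max' ((Set.Finite.toFinset_nonempty hP.1).mpr hP.2)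
    let base : Bool → ℕ → Bool := fun b i =>
      if i < imax then f2b (kneading T c (imax - 1 - i))
      else if i = imax then b
      else decide (c < x (i + 1))
    {(x 0, psiL L (base false)), (x 0, psiL L (base true))}
  else if {i : ℕ | x (i + 1) = c}.Infinite then
    if hper : ∃ m, rawItin T c (T c) m = 1 then
      let n : ℕ := Nat.find hper + 1
      let i0 : ℕ := sInf {i : ℕ | x (i + 1) = c}
      {(x 0, psiL L fun i => f2b (kneading T c (((i0 : ℤ) - i - 1) % (n : ℤ)).toNat))}
    else ∅
  else
    {(x 0, psiL L fun i => decide (c < x (i + 1)))}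

/-- `Y = φ(X) ⊆ [0,1] × ℝ`, with the Euclidean (subspace) topology. -/
def phiImage (T : ℝ → ℝ) (c : ℝ) (L : ℕ → Bool) : Set (ℝ × ℝ) :=
  ⋃ x ∈ invLimitSet T, phiSet T c L x

/-- The identification on `Y`: `a ∼ b` iff `a, b ∈ φ(x)` for some `x ∈ X`.
The quotient `Y/∼` is `Quot` of this relation, with the quotient topology. -/
def phiRel (T : ℝ → ℝ) (c : ℝ) (L : ℕ → Bool)
    (a b : ↥(phiImage T c L)) : Prop :=
  ∃ x ∈ invLimitSet T, (a : ℝ × ℝ) ∈ phiSet T c L x ∧ (b : ℝ × ℝ) ∈ phiSet T c L x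

namespace Stmt18

open Set Function

variable {T : ℝ → ℝ} {c : ℝ}

lemma rawItin_eq_one_iff {x : ℝ} {n : ℕ} : rawItin T c x n = 1 ↔ T^[n] x = c := by
  unfold rawItin
  split_ifs with h1 h2
  · exact iff_of_false (by decide) (fun h => absurd h1 (by simp [h]))
  · simpa using h2
  · exact iff_of_false (by decide) h2

lemma rawItin_eq_two_iff {x : ℝ} {n : ℕ} : rawItin T c x n = 2 ↔ c < T^[n] x := by
  unfold rawItin
  split_ifs with h1 h2
  · exact iff_of_false (by decide) (fun h => absurd h1 (asymm h))
  · exact iff_of_false (by decide) (fun h => absurd h2 (ne_of_gt h))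
  · exact iff_of_true rfl (lt_of_le_of_ne (not_lt.mp h1) (Ne.symm h2))

lemma f2b_rawItin {x : ℝ} {n : ℕ} (hne : T^[n] x ≠ c) :
    f2b (rawItin T c x n) = decide (c < T^[n] x) := by
  by_cases hlt : c < T^[n] x
  · simp [f2b, rawItin_eq_two_iff.mpr hlt, hlt]
  · have h2 : rawItin T c x n ≠ 2 := fun hh => hlt (rawItin_eq_two_iff.mp hh)
    have : f2b (rawItin T c x n) = false := by
      generalize rawItin T c x n = v at h2 ⊢; fin_cases v <;> simp_all [f2b]
    simp [this, hlt]

/-- abbreviation for the periodicity hypothesis -/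
def Hq (T : ℝ → ℝ) (c : ℝ) : Prop := ∃ i, rawItin T c (T c) i = 1

open Classical in
noncomputable def bstarB (T : ℝ → ℝ) (c : ℝ) : Bool :=
  if hq : Hq T c then
    decide (Odd (onesCount (rawItin T c (T c)) (Nat.find hq))) else false

section Periodic
variable (hq : Hq T c)

lemma iter_find : T^[Nat.find hq] (T c) = c := rawItin_eq_one_iff.mp (Nat.find_spec hq)

lemma iter_n_c : T^[Nat.find hq + 1] c = c := by
  rw [Function.iterate_succ_apply]; exact iter_find hq

lemma iterate_mul_period {f : ℝ → ℝ} {y : ℝ} {p : ℕ} (hp : f^[p] y = y) (q : ℕ) :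
    f^[p * q] y = y := by
  induction q with
  | zero => simp
  | succ k ih => rw [Nat.mul_succ, Function.iterate_add_apply, hp, ih]

lemma iterate_mod {f : ℝ → ℝ} {y : ℝ} {p : ℕ} (hp : f^[p] y = y) (a : ℕ) :
    f^[a] y = f^[a % p] y := by
  conv_lhs => rw [← Nat.mod_add_div a p]
  rw [Function.iterate_add_apply, iterate_mul_period hp]

lemma iter_c_mod (a : ℕ) : T^[a] c = T^[a % (Nat.find hq + 1)] c :=
  iterate_mod (iter_n_c hq) a

lemma not_iter_c_lt {m : ℕ} (h0 : 0 < m) (h : m < Nat.find hq + 1) : T^[m] c ≠ c := by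
  intro hc
  have : rawItin T c (T c) (m - 1) = 1 := by
    rw [rawItin_eq_one_iff, ← Function.iterate_succ_apply]
    show T^[m - 1 + 1] c = c
    have hm : m - 1 + 1 = m := by omega
    rw [hm]; exact hc
  exact Nat.find_min hq (by omega) this

lemma iter_c_eq_iff {m : ℕ} : T^[m] c = c ↔ m % (Nat.find hq + 1) = 0 := by
  set n := Nat.find hq + 1 with hn
  constructor
  · intro h
    by_contra hr
    have hrn : m % n < n := Nat.mod_lt _ (by omega)
    exact not_iter_c_lt hq (Nat.pos_of_ne_zero hr) hrn ((iter_c_mod hq m).symm.trans h)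
  · intro h
    rw [iter_c_mod hq m, h]; rfl

lemma succ_mod_eq_iff {n j : ℕ} (hn : 0 < n) : (j + 1) % n = 0 ↔ j % n = n - 1 := by
  have h1 : (j + 1) % n = (j % n + 1) % n := by rw [Nat.mod_add_mod]
  have h2 : j % n < n := Nat.mod_lt _ hn
  rw [h1]
  rcases Nat.lt_or_ge (j % n) (n - 1) with h | h
  · rw [Nat.mod_eq_of_lt (by omega)]; omega
  · have : j % n = n - 1 := by omega
    rw [this]
    have : n - 1 + 1 = n := by omega
    rw [this, Nat.mod_self]
    constructor <;> intro <;> omega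

lemma raw_one_iff (j : ℕ) :
    rawItin T c (T c) j = 1 ↔ j % (Nat.find hq + 1) = Nat.find hq := by
  rw [rawItin_eq_one_iff, ← Function.iterate_succ_apply, iter_c_eq_iff hq,
    succ_mod_eq_iff (by omega : 0 < Nat.find hq + 1)]
  omega

lemma iterTc_mod (j : ℕ) :
    T^[j] (T c) = T^[j % (Nat.find hq + 1)] (T c) := by
  rw [← Function.iterate_succ_apply, ← Function.iterate_succ_apply, iter_c_mod hq (j+1),
    iter_c_mod hq (j % (Nat.find hq + 1) + 1), Nat.mod_add_mod]

lemma raw_mod (j : ℕ) :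
    rawItin T c (T c) j = rawItin T c (T c) (j % (Nat.find hq + 1)) := by
  unfold rawItin
  rw [iterTc_mod hq j]
  congr

end Periodic


open Set Function

variable {T : ℝ → ℝ} {c : ℝ}

section Knead
variable (hq : Hq T c)
include hq

/-- the two candidate kneading sequences -/
noncomputable def kw (T : ℝ → ℝ) (c : ℝ) (hq : Hq T c) (b : Fin 3) : ℕ → Fin 3 :=
  fun j => if j % (Nat.find hq + 1) = Nat.find hq then b
    else rawItin T c (T c) (j % (Nat.find hq + 1))

open Classical in
lemma kneading_eq :
    kneading T c = if PlexLe (kw T c hq 0) (kw T c hq 2) then kw T c hq 0 else kw T c hq 2 := by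
  have hq' : ∃ i, rawItin T c (T c) i = 1 := hq
  unfold kneading
  rw [dif_pos hq']
  rfl

lemma find_mod : Nat.find hq % (Nat.find hq + 1) = Nat.find hq :=
  Nat.mod_eq_of_lt (by omega)

lemma kw_of_ne {j : ℕ} (h : j % (Nat.find hq + 1) ≠ Nat.find hq) (b : Fin 3) :
    kw T c hq b j = rawItin T c (T c) j := by
  rw [kw, if_neg h, ← raw_mod hq]

lemma kw_of_eq {j : ℕ} (h : j % (Nat.find hq + 1) = Nat.find hq) (b : Fin 3) :
    kw T c hq b j = b := by rw [kw, if_pos h]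

lemma kw_onesCount (b : Fin 3) :
    onesCount (kw T c hq b) (Nat.find hq) = onesCount (rawItin T c (T c)) (Nat.find hq) := by
  unfold onesCount
  congr 1
  apply Finset.filter_congr
  intro i hi
  rw [Finset.mem_range] at hi
  rw [kw_of_ne hq (by rw [Nat.mod_eq_of_lt (by omega)]; omega) b]

lemma plex_of_even (h : Even (onesCount (rawItin T c (T c)) (Nat.find hq))) :
    PlexLe (kw T c hq 0) (kw T c hq 2) := by
  left
  refine ⟨Nat.find hq, fun i hi => ?_, ?_, Or.inl ⟨?_, ?_⟩⟩
  · rw [kw_of_ne hq (by rw [Nat.mod_eq_of_lt (by omega)]; omega),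
      kw_of_ne hq (by rw [Nat.mod_eq_of_lt (by omega)]; omega)]
  · rw [kw_of_eq hq (find_mod hq), kw_of_eq hq (find_mod hq)]; decide
  · rw [kw_of_eq hq (find_mod hq), kw_of_eq hq (find_mod hq)]; decide
  · rwa [kw_onesCount hq]

lemma not_plex_of_odd (h : Odd (onesCount (rawItin T c (T c)) (Nat.find hq))) :
    ¬ PlexLe (kw T c hq 0) (kw T c hq 2) := by
  rintro (⟨k, hag, hne, hcase⟩ | heq)
  · have hk : k % (Nat.find hq + 1) = Nat.find hq := by
      by_contra hk
      exact hne (by rw [kw_of_ne hq hk, kw_of_ne hq hk])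
    rcases Nat.lt_trichotomy k (Nat.find hq) with hlt | heq' | hgt
    · rw [Nat.mod_eq_of_lt (by omega)] at hk; omega
    · subst heq'
      rcases hcase with ⟨_, hev⟩ | ⟨hlt2, _⟩
      · rw [kw_onesCount hq] at hev
        exact (Nat.not_even_iff_odd.mpr h) hev
      · rw [kw_of_eq hq (find_mod hq), kw_of_eq hq (find_mod hq)] at hlt2
        exact absurd hlt2 (by decide)
    · have := hag (Nat.find hq) hgt
      rw [kw_of_eq hq (find_mod hq), kw_of_eq hq (find_mod hq)] at this
      exact absurd this (by decide)
  · have := congrFun heq (Nat.find hq)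
    rw [kw_of_eq hq (find_mod hq), kw_of_eq hq (find_mod hq)] at this
    exact absurd this (by decide)

lemma kneading_of_mod_ne {j : ℕ} (h : j % (Nat.find hq + 1) ≠ Nat.find hq) :
    kneading T c j = rawItin T c (T c) j := by
  rw [kneading_eq hq]
  split_ifs <;> rw [kw_of_ne hq h]

lemma bstarB_eq : bstarB T c = decide (Odd (onesCount (rawItin T c (T c)) (Nat.find hq))) := by
  rw [bstarB, dif_pos hq]

lemma kneading_star {j : ℕ} (h : j % (Nat.find hq + 1) = Nat.find hq) :
    f2b (kneading T c j) = bstarB T c := by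
  rw [kneading_eq hq, bstarB_eq hq]
  by_cases hev : Even (onesCount (rawItin T c (T c)) (Nat.find hq))
  · rw [if_pos (plex_of_even hq hev), kw_of_eq hq h]
    simp [f2b, Nat.not_odd_iff_even.mpr hev]
  · rw [if_neg (fun hp => (not_plex_of_odd hq (Nat.not_even_iff_odd.mp hev)) hp),
      kw_of_eq hq h]
    simp [f2b, Nat.not_even_iff_odd.mp hev]

lemma f2b_kneading_ne {j : ℕ} (hj : T^[j] (T c) ≠ c) :
    f2b (kneading T c j) = decide (c < T^[j] (T c)) := by
  have hmod : j % (Nat.find hq + 1) ≠ Nat.find hq := by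
    intro h
    exact hj (rawItin_eq_one_iff.mp ((raw_one_iff hq j).mpr h))
  rw [kneading_of_mod_ne hq hmod, f2b_rawItin hj]

lemma f2b_kneading_eqc {j : ℕ} (hj : T^[j] (T c) = c) :
    f2b (kneading T c j) = bstarB T c := by
  exact kneading_star hq ((raw_one_iff hq j).mp (rawItin_eq_one_iff.mpr hj))

end Knead

lemma kneading_no (hnq : ¬ Hq T c) : kneading T c = rawItin T c (T c) := dif_neg hnq

lemma f2b_kneading_ne' (hnq : ¬ Hq T c) {j : ℕ} (hj : T^[j] (T c) ≠ c) :
    f2b (kneading T c j) = decide (c < T^[j] (T c)) := by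
  rw [kneading_no hnq, f2b_rawItin hj]


open Set Function

variable {T : ℝ → ℝ} {c : ℝ}

section Uni
variable (hT : IsUnimodal T c)
include hT

lemma hc0 : 0 < c := hT.2.2.2.1
lemma hc1 : c < 1 := hT.2.2.2.2.1
lemma hcmem : c ∈ Icc (0:ℝ) 1 := ⟨(hc0 hT).le, (hc1 hT).le⟩
lemma hT0 : T 0 = 0 := hT.2.2.1
lemma hmaps : MapsTo T (Icc 0 1) (Icc 0 1) := hT.2.1

lemma T_le_Tc {z : ℝ} (hz : z ∈ Icc (0:ℝ) 1) : T z ≤ T c := by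
  rcases le_or_gt z c with h | h
  · rcases eq_or_lt_of_le h with rfl | h'
    · exact le_refl _
    · exact (hT.2.2.2.2.2.1 ⟨hz.1, h⟩ ⟨(hc0 hT).le, le_refl c⟩ h').le
  · exact (hT.2.2.2.2.2.2 ⟨le_refl c, (hc1 hT).le⟩ ⟨h.le, hz.2⟩ h).le

lemma T_lt_Tc {z : ℝ} (hz : z ∈ Icc (0:ℝ) 1) (hne : z ≠ c) : T z < T c := by
  rcases lt_or_gt_of_ne hne with h | h
  · exact hT.2.2.2.2.2.1 ⟨hz.1, h.le⟩ ⟨(hc0 hT).le, le_refl c⟩ h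
  · exact hT.2.2.2.2.2.2 ⟨le_refl c, (hc1 hT).le⟩ ⟨h.le, hz.2⟩ h

lemma Tc_pos : 0 < T c := by
  have := hT.2.2.2.2.2.1 ⟨le_refl (0:ℝ), (hc0 hT).le⟩ ⟨(hc0 hT).le, le_refl c⟩ (hc0 hT)
  rwa [hT0 hT] at this

lemma Tc_mem : T c ∈ Icc (0:ℝ) 1 := hmaps hT (hcmem hT)
lemma T1_le_Tc : T 1 ≤ T c := T_le_Tc hT ⟨zero_le_one, le_refl 1⟩

lemma iter_mem {z : ℝ} (hz : z ∈ Icc (0:ℝ) 1) (k : ℕ) : T^[k] z ∈ Icc (0:ℝ) 1 := by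
  induction k with
  | zero => exact hz
  | succ m ih => rw [Function.iterate_succ_apply']; exact hmaps hT ih

lemma contOn_iter (k : ℕ) : ContinuousOn (T^[k]) (Icc 0 1) := by
  induction k with
  | zero => simpa using continuousOn_id
  | succ m ih =>
      rw [Function.iterate_succ]
      exact ContinuousOn.comp ih hT.1 (hmaps hT)

/-- left branch, as map of subtypes -/
noncomputable def fL : ↥(Icc (0:ℝ) c) → ↥(Icc (0:ℝ) (T c)) := fun z =>
  ⟨T z, by
    constructor
    · rcases eq_or_lt_of_le z.2.1 with h | h
      · rw [← h, hT0 hT]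
      · calc (0:ℝ) = T 0 := (hT0 hT).symm
          _ ≤ T z := (hT.2.2.2.2.2.1 ⟨le_refl 0, (hc0 hT).le⟩ ⟨z.2.1, z.2.2⟩ h).le
    · exact T_le_Tc hT ⟨z.2.1, z.2.2.trans (hc1 hT).le⟩⟩

lemma fL_cont : Continuous (fL hT) := by
  apply Continuous.subtype_mk
  exact (hT.1.mono (Icc_subset_Icc (le_refl 0) (hc1 hT).le)).restrict

lemma fL_bij : Function.Bijective (fL hT) := by
  constructor
  · intro a b hab
    apply Subtype.ext
    exact hT.2.2.2.2.2.1.injOn a.2 b.2 (congrArg Subtype.val hab)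
  · rintro ⟨y, hy⟩
    have : y ∈ Icc (T 0) (T c) := by rwa [hT0 hT]
    obtain ⟨z, hz, hzy⟩ := intermediate_value_Icc (hc0 hT).le
      (hT.1.mono (Icc_subset_Icc (le_refl 0) (hc1 hT).le)) this
    exact ⟨⟨z, hz⟩, Subtype.ext hzy⟩

noncomputable def homeoL : ↥(Icc (0:ℝ) c) ≃ₜ ↥(Icc (0:ℝ) (T c)) :=
  Continuous.homeoOfEquivCompactToT2 (f := Equiv.ofBijective _ (fL_bij hT)) (fL_cont hT)

noncomputable def invL : ℝ → ℝ := fun y =>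
  ((homeoL hT).symm (projIcc 0 (T c) (Tc_pos hT).le y) : ℝ)

lemma invL_cont : Continuous (invL hT) :=
  continuous_subtype_val.comp ((homeoL hT).symm.continuous.comp continuous_projIcc)

lemma invL_T {z : ℝ} (hz : z ∈ Icc (0:ℝ) c) : invL hT (T z) = z := by
  unfold invL
  have hmem : T z ∈ Icc (0:ℝ) (T c) := (fL hT ⟨z, hz⟩).2
  rw [projIcc_of_mem _ hmem]
  have : (⟨T z, hmem⟩ : ↥(Icc (0:ℝ) (T c))) = homeoL hT ⟨z, hz⟩ := rfl
  rw [this, Homeomorph.symm_apply_apply]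

/-- right branch -/
noncomputable def fR : ↥(Icc c (1:ℝ)) → ↥(Icc (T 1) (T c)) := fun z =>
  ⟨T z, by
    constructor
    · rcases eq_or_lt_of_le z.2.2 with h | h
      · rw [h]
      · exact (hT.2.2.2.2.2.2 ⟨z.2.1, z.2.2⟩ ⟨(hc1 hT).le, le_refl 1⟩ h).le
    · exact T_le_Tc hT ⟨(hc0 hT).le.trans z.2.1, z.2.2⟩⟩


lemma fR_cont : Continuous (fR hT) := by
  apply Continuous.subtype_mk
  exact (hT.1.mono (Icc_subset_Icc (hc0 hT).le (le_refl 1))).restrict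

lemma fR_bij : Function.Bijective (fR hT) := by
  constructor
  · intro a b hab
    apply Subtype.ext
    exact hT.2.2.2.2.2.2.injOn a.2 b.2 (congrArg Subtype.val hab)
  · rintro ⟨y, hy⟩
    obtain ⟨z, hz, hzy⟩ := intermediate_value_Icc' (hc1 hT).le
      (hT.1.mono (Icc_subset_Icc (hc0 hT).le (le_refl 1))) hy
    exact ⟨⟨z, hz⟩, Subtype.ext hzy⟩

noncomputable def homeoR : ↥(Icc c (1:ℝ)) ≃ₜ ↥(Icc (T 1) (T c)) :=
  Continuous.homeoOfEquivCompactToT2 (f := Equiv.ofBijective _ (fR_bij hT)) (fR_cont hT)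

noncomputable def invR : ℝ → ℝ := fun y =>
  ((homeoR hT).symm (projIcc (T 1) (T c) (T1_le_Tc hT) y) : ℝ)

lemma invR_cont : Continuous (invR hT) :=
  continuous_subtype_val.comp ((homeoR hT).symm.continuous.comp continuous_projIcc)

lemma invR_T {z : ℝ} (hz : z ∈ Icc c (1:ℝ)) : invR hT (T z) = z := by
  unfold invR
  have hmem : T z ∈ Icc (T 1) (T c) := (fR hT ⟨z, hz⟩).2
  rw [projIcc_of_mem _ hmem]
  have : (⟨T z, hmem⟩ : ↥(Icc (T 1) (T c))) = homeoR hT ⟨z, hz⟩ := rfl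
  rw [this, Homeomorph.symm_apply_apply]

noncomputable def Bb (b : Bool) (y : ℝ) : ℝ := if b = true then invR hT y else invL hT y

lemma Bb_T {z : ℝ} (hz : z ∈ Icc (0:ℝ) 1) {b : Bool} (hb : z ≠ c → b = decide (c < z)) :
    Bb hT b (T z) = z := by
  rcases lt_trichotomy z c with h | rfl | h
  · have hb' : b = false := by rw [hb h.ne]; simp [not_lt.mpr h.le]
    rw [Bb, hb']
    simpa using invL_T hT ⟨hz.1, h.le⟩
  · rcases Bool.dichotomy b with hb' | hb' <;> rw [Bb, hb']
    · simpa using invL_T hT ⟨hz.1, le_refl z⟩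
    · simpa using invR_T hT ⟨le_refl z, hz.2⟩
  · have hb' : b = true := by rw [hb h.ne']; simp [h]
    rw [Bb, hb']
    simpa using invR_T hT ⟨h.le, hz.2⟩

/-- reconstruction of a backward orbit from `x₀` and an itinerary -/
noncomputable def R (p : ℝ × (ℕ → Bool)) : ℕ → ℝ := fun n =>
  Nat.rec p.1 (fun m xm => Bb hT (p.2 m) xm) n

lemma R_zero (p : ℝ × (ℕ → Bool)) : R hT p 0 = p.1 := rfl
lemma R_succ (p : ℝ × (ℕ → Bool)) (n : ℕ) : R hT p (n+1) = Bb hT (p.2 n) (R hT p n) := rfl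

lemma R_cont (n : ℕ) : Continuous (fun p : ℝ × (ℕ → Bool) => R hT p n) := by
  induction n with
  | zero => exact continuous_fst
  | succ m ih =>
      have : (fun p : ℝ × (ℕ → Bool) => R hT p (m+1)) =
          fun p => if p.2 m = true then invR hT (R hT p m) else invL hT (R hT p m) := rfl
      rw [this]
      have hclopen : IsClopen {p : ℝ × (ℕ → Bool) | p.2 m = true} := by
        have : Continuous (fun p : ℝ × (ℕ → Bool) => p.2 m) :=
          (continuous_apply m).comp continuous_snd
        exact (isClopen_discrete {true}).preimage this
      apply Continuous.if
      · rw [hclopen.frontier_eq]; intro a ha; exact absurd ha (Set.notMem_empty a)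
      · exact (invR_cont hT).comp ih
      · exact (invL_cont hT).comp ih

lemma R_recover {x : ℕ → ℝ} (hx : x ∈ invLimitSet T) {s : ℕ → Bool}
    (hs : ∀ i, x (i+1) ≠ c → s i = decide (c < x (i+1))) :
    ∀ n, R hT (x 0, s) n = x n := by
  intro n
  induction n with
  | zero => rfl
  | succ m ih =>
      rw [R_succ, ih, ← hx.2 m]
      exact Bb_T hT (hx.1 (m+1)) (hs m)

end Uni

open Set Function

/-- the `i`-th term of the series defining `psiL` -/
noncomputable def pterm (L s : ℕ → Bool) (i : ℕ) : ℝ :=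
  (-1 : ℝ) ^ ((numOnes L (i + 1) : ℤ) - (numOnes s (i + 1) : ℤ)) * (3 : ℝ) ^ (-(i + 1 : ℤ))

lemma psiL_eq (L s : ℕ → Bool) : psiL L s = 1 / 2 + ∑' i, pterm L s i := rfl

lemma abs_neg_one_zpow (m : ℤ) : |(-1:ℝ) ^ m| = 1 := by
  rcases Int.even_or_odd m with h | h
  · rw [h.neg_one_zpow, abs_one]
  · rw [h.neg_one_zpow, abs_neg, abs_one]

lemma abs_pterm (L s : ℕ → Bool) (i : ℕ) : |pterm L s i| = (3 : ℝ) ^ (-(i + 1 : ℤ)) := by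
  rw [pterm, abs_mul, abs_neg_one_zpow, one_mul, abs_of_pos (by positivity)]

lemma zpow3_le (i : ℕ) : (3 : ℝ) ^ (-(i + 1 : ℤ)) ≤ (1/3 : ℝ) ^ i := by
  rw [zpow_neg, one_div, inv_pow, inv_le_inv₀ (by positivity) (by positivity)]
  calc (3:ℝ) ^ i ≤ (3:ℝ) ^ (i+1 : ℕ) := by
        apply pow_le_pow_right₀ (by norm_num); omega
    _ = (3:ℝ) ^ ((i:ℤ) + 1) := by rw [← zpow_natCast]; push_cast; ring_nf
  
lemma summable_pterm (L s : ℕ → Bool) : Summable (pterm L s) := by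
  apply Summable.of_norm_bounded (g := fun i => (1/3 : ℝ) ^ i)
  · exact summable_geometric_of_lt_one (by norm_num) (by norm_num)
  · intro i
    rw [Real.norm_eq_abs, abs_pterm]
    exact zpow3_le i

lemma numOnes_succ (s : ℕ → Bool) (k : ℕ) :
    numOnes s (k+1) = numOnes s k + (if s k = true then 1 else 0) := by
  unfold numOnes
  rw [Finset.range_add_one, Finset.filter_insert]
  split_ifs with h
  · rw [Finset.card_insert_of_notMem (by simp)]
  · rfl

lemma numOnes_congr {s t : ℕ → Bool} {k : ℕ} (h : ∀ i < k, s i = t i) :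
    numOnes s k = numOnes t k := by
  unfold numOnes
  congr 1
  apply Finset.filter_congr
  intro i hi
  rw [Finset.mem_range] at hi
  rw [h i hi]

lemma numOnes_as_fin (s : ℕ → Bool) (k : ℕ) :
    numOnes s k = ∑ j : Fin k, (if s j = true then 1 else 0) := by
  rw [numOnes, Finset.card_filter,
    ← Fin.sum_univ_eq_sum_range (fun i => if s i = true then 1 else 0) k]

lemma continuous_numOnes (k : ℕ) : Continuous (fun s : ℕ → Bool => numOnes s k) := by
  have h1 : Continuous (fun s : ℕ → Bool => (fun j : Fin k => s j)) :=
    continuous_pi fun j => continuous_apply (j : ℕ)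
  have h2 : Continuous (fun t : Fin k → Bool => ∑ j : Fin k, (if t j = true then 1 else 0)) :=
    continuous_of_discreteTopology
  have : (fun s : ℕ → Bool => numOnes s k) =
      (fun t : Fin k → Bool => ∑ j : Fin k, (if t j = true then 1 else 0)) ∘
        (fun s : ℕ → Bool => (fun j : Fin k => s j)) := by
    funext s; exact numOnes_as_fin s k
  rw [this]
  exact h2.comp h1

lemma continuous_psiL (L : ℕ → Bool) : Continuous (psiL L) := by
  apply Continuous.add continuous_const
  apply continuous_tsum (u := fun i => (1/3 : ℝ) ^ i)
  · intro i
    have h1 : Continuous (fun s : ℕ → Bool => numOnes s (i+1)) := continuous_numOnes (i+1)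
    have h2 : Continuous (fun m : ℕ =>
        (-1 : ℝ) ^ ((numOnes L (i + 1) : ℤ) - (m : ℤ)) * (3 : ℝ) ^ (-(i + 1 : ℤ))) :=
      continuous_of_discreteTopology
    exact h2.comp h1
  · exact summable_geometric_of_lt_one (by norm_num) (by norm_num)
  · intro i s
    rw [Real.norm_eq_abs]
    show |pterm L s i| ≤ _
    rw [abs_pterm]
    exact zpow3_le i

lemma neg_one_zpow_sub_one (a : ℤ) : (-1 : ℝ) ^ (a - 1) = -((-1 : ℝ) ^ a) := by
  rw [zpow_sub_one₀ (by norm_num : (-1:ℝ) ≠ 0)]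
  norm_num

lemma pterm_flip {L s t : ℕ → Bool} {i : ℕ}
    (h : (numOnes s (i+1) : ℤ) = numOnes t (i+1) + 1 ∨ (numOnes t (i+1) : ℤ) = numOnes s (i+1) + 1) :
    pterm L s i = - pterm L t i := by
  unfold pterm
  rcases h with h | h
  · rw [h]
    have : (numOnes L (i + 1) : ℤ) - ((numOnes t (i+1) : ℤ) + 1) = ((numOnes L (i+1) : ℤ) - numOnes t (i+1)) - 1 := by ring
    rw [this, neg_one_zpow_sub_one]
    ring
  · rw [h]
    have : (numOnes L (i + 1) : ℤ) - ((numOnes s (i+1) : ℤ) + 1) = ((numOnes L (i+1) : ℤ) - numOnes s (i+1)) - 1 := by ring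
    rw [this, neg_one_zpow_sub_one]
    ring

lemma abs_pterm_sub (L s t : ℕ → Bool) (i : ℕ) :
    |pterm L s i - pterm L t i| ≤ 2 * (3 : ℝ) ^ (-(i + 1 : ℤ)) := by
  calc |pterm L s i - pterm L t i| ≤ |pterm L s i| + |pterm L t i| := abs_sub _ _
    _ = 2 * (3 : ℝ) ^ (-(i + 1 : ℤ)) := by rw [abs_pterm, abs_pterm]; ring

lemma tsum_geom_tail (k : ℕ) :
    ∑' i : ℕ, 2 * (3 : ℝ) ^ (-((i + k : ℕ) + 1 : ℤ)) = 3 * (3 : ℝ) ^ (-(k + 1 : ℤ)) := by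
  have heq : ∀ i : ℕ, 2 * (3 : ℝ) ^ (-((i + k : ℕ) + 1 : ℤ)) =
      (2 * (3 : ℝ) ^ (-(k + 1 : ℤ))) * (1/3 : ℝ) ^ i := by
    intro i
    have : (-((i + k : ℕ) + 1 : ℤ)) = (-(k + 1 : ℤ)) + (-(i:ℤ)) := by push_cast; ring
    rw [this, zpow_add₀ (by norm_num : (3:ℝ) ≠ 0)]
    rw [zpow_neg (3:ℝ) (i:ℤ), zpow_natCast, one_div, inv_pow]
    ring
  rw [tsum_congr heq, tsum_mul_left, tsum_geometric_of_lt_one (by norm_num) (by norm_num)]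
  norm_num
  ring

set_option maxHeartbeats 1000000 in
lemma psiL_injective (L : ℕ → Bool) : Function.Injective (psiL L) := by
  intro s t hst
  by_contra hne
  have hex : ∃ i, s i ≠ t i := by
    by_contra h
    push_neg at h
    exact hne (funext h)
  classical
  set i0 := Nat.find hex with hi0
  have hagree : ∀ i < i0, s i = t i := fun i hi => not_not.mp (Nat.find_min hex hi)
  set D := fun i => pterm L s i - pterm L t i with hD
  have hDsum : Summable D := (summable_pterm L s).sub (summable_pterm L t)
  have hzero : ∀ i < i0, D i = 0 := by
    intro i hi
    have : numOnes s (i+1) = numOnes t (i+1) :=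
      numOnes_congr (fun j hj => hagree j (by omega))
    simp [hD, pterm, this]
  have hflip : D i0 = 2 * pterm L s i0 := by
    have hcnt : numOnes s i0 = numOnes t i0 := numOnes_congr hagree
    have hne0 : s i0 ≠ t i0 := Nat.find_spec hex
    have h : (numOnes s (i0+1) : ℤ) = numOnes t (i0+1) + 1 ∨
        (numOnes t (i0+1) : ℤ) = numOnes s (i0+1) + 1 := by
      rcases Bool.dichotomy (s i0) with h1 | h1 <;> rcases Bool.dichotomy (t i0) with h2 | h2 <;>
        simp [h1, h2] at hne0 ⊢ <;>
        rw [numOnes_succ, numOnes_succ, h1, h2, hcnt] <;> simp <;> push_cast <;> ring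
    have := pterm_flip (L := L) (Or.symm h)
    rcases h with h | h
    · have h2 : pterm L t i0 = - pterm L s i0 := pterm_flip (Or.inr h)
      rw [hD]; simp only; rw [h2]; ring
    · have h2 : pterm L t i0 = - pterm L s i0 := pterm_flip (Or.inl h)
      rw [hD]; simp only; rw [h2]; ring
  have habs : |D i0| = 2 * (3 : ℝ) ^ (-(i0 + 1 : ℤ)) := by
    rw [hflip, abs_mul, abs_pterm]; norm_num
  -- split the sum
  have hsplit : (0:ℝ) = ∑' i, D i := by
    have : ∑' i, D i = psiL L s - psiL L t := by
      rw [psiL_eq, psiL_eq, hD, Summable.tsum_sub (summable_pterm L s) (summable_pterm L t)]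
      ring
    rw [this, hst, sub_self]
  have htail : |∑' i, D (i + (i0 + 1))| ≤ 3 * (3 : ℝ) ^ (-((i0 + 1 : ℕ) + 1 : ℤ)) := by
    have hsD : Summable (fun i => D (i + (i0+1))) := hDsum.comp_injective (add_left_injective _)
    have hb : Summable (fun i : ℕ => 2 * (3 : ℝ) ^ (-((i + (i0+1) : ℕ) + 1 : ℤ))) := by
      apply Summable.of_nonneg_of_le (fun i => by positivity) (fun i => ?_)
        ((summable_geometric_of_lt_one (show (0:ℝ) ≤ 1/3 by norm_num) (by norm_num)).mul_left 2)
      calc 2 * (3:ℝ) ^ (-((i + (i0+1) : ℕ) + 1 : ℤ)) ≤ 2 * (1/3:ℝ) ^ (i + (i0+1)) := by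
            have := zpow3_le (i + (i0+1)); linarith
        _ ≤ 2 * (1/3:ℝ) ^ i := by
            have : (1/3:ℝ) ^ (i + (i0+1)) ≤ (1/3:ℝ) ^ i :=
              pow_le_pow_of_le_one (by norm_num) (by norm_num) (by omega)
            linarith
    have hnorm : Summable (fun i => ‖D (i + (i0+1))‖) := by
      simpa [Real.norm_eq_abs] using hsD.abs
    calc |∑' i, D (i + (i0+1))| ≤ ∑' i, |D (i + (i0+1))| := by
          simpa [Real.norm_eq_abs] using norm_tsum_le_tsum_norm hnorm
      _ ≤ ∑' i : ℕ, 2 * (3:ℝ) ^ (-((i + (i0+1) : ℕ) + 1 : ℤ)) :=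
          Summable.tsum_le_tsum (fun i => abs_pterm_sub L s t (i + (i0+1))) hsD.abs hb
      _ = 3 * (3:ℝ) ^ (-((i0 + 1 : ℕ) + 1 : ℤ)) := tsum_geom_tail (i0+1)
  have hsum : ∑' i, D i = D i0 + ∑' i, D (i + (i0+1)) := by
    rw [← Summable.sum_add_tsum_nat_add (i0+1) hDsum]
    congr 1
    apply Finset.sum_eq_single_of_mem i0 (Finset.mem_range.mpr (by omega))
    intro b hb hbne
    exact hzero b (by rw [Finset.mem_range] at hb; omega)
  have h1 : D i0 + ∑' i, D (i + (i0+1)) = 0 := by rw [← hsum, ← hsplit]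
  have h2 : |D i0| ≤ |∑' i, D (i + (i0+1))| := by
    have : D i0 = - ∑' i, D (i+(i0+1)) := by linarith
    rw [this, abs_neg]
  have hpos : (0:ℝ) < (3:ℝ)^(-(i0+1:ℤ)) := by positivity
  have h3 : 3 * (3:ℝ) ^ (-((i0 + 1 : ℕ) + 1 : ℤ)) = (3:ℝ)^(-(i0+1:ℤ)) := by
    rw [show (-((i0 + 1 : ℕ) + 1 : ℤ)) = (-(i0+1:ℤ)) + (-1) by push_cast; ring,
      zpow_add₀ (by norm_num : (3:ℝ) ≠ 0)]
    norm_num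
    ring
  rw [habs] at h2
  rw [h3] at htail
  linarith

section Char
variable {T : ℝ → ℝ} {c : ℝ}

/-- characterization of the allowed itineraries of a backward orbit -/
def Allowed (T : ℝ → ℝ) (c : ℝ) (x : ℕ → ℝ) (s : ℕ → Bool) : Prop :=
  (∀ i, x (i+1) ≠ c → s i = decide (c < x (i+1))) ∧
  (∀ i j, i < j → x (i+1) = c → x (j+1) = c → s i = bstarB T c)

lemma inv_iter {x : ℕ → ℝ} (hx : x ∈ invLimitSet T) (i k : ℕ) : x i = T^[k] (x (i + k)) := by
  induction k with
  | zero => rfl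
  | succ m ih =>
      rw [Function.iterate_succ_apply, show i + (m+1) = (i+m)+1 from rfl, hx.2 (i+m)]
      exact ih

lemma coord_iter {x : ℕ → ℝ} (hx : x ∈ invLimitSet T) {i j : ℕ} (h : i ≤ j)
    (hj : x (j+1) = c) : x (i+1) = T^[j-i] c := by
  have h2 := inv_iter hx (i+1) (j-i)
  rw [show i+1+(j-i) = j+1 by omega, hj] at h2
  exact h2

lemma hq_of_lt {x : ℕ → ℝ} (hx : x ∈ invLimitSet T) {i j : ℕ} (hij : i < j)
    (hi : x (i+1) = c) (hj : x (j+1) = c) : Hq T c := by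
  have h1 : T^[j-i] c = c := by rw [← coord_iter hx hij.le hj]; exact hi
  refine ⟨j-i-1, rawItin_eq_one_iff.mpr ?_⟩
  rw [← Function.iterate_succ_apply, Nat.succ_eq_add_one, show j-i-1+1 = j-i by omega]
  exact h1

variable (L : ℕ → Bool)

open Classical in
lemma phiSet_eq {x : ℕ → ℝ} (hx : x ∈ invLimitSet T) :
    phiSet T c L x = {p : ℝ × ℝ | ∃ s, Allowed T c x s ∧ p = (x 0, psiL L s)} := by
  by_cases hP : {i : ℕ | x (i + 1) = c}.Finite ∧ {i : ℕ | x (i + 1) = c}.Nonempty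
  · -- finite, nonempty: pair case
    set imax := hP.1.toFinset.max' ((Set.Finite.toFinset_nonempty hP.1).mpr hP.2) with himax_def
    have himax : x (imax + 1) = c := by
      have := Finset.max'_mem hP.1.toFinset ((Set.Finite.toFinset_nonempty hP.1).mpr hP.2)
      rwa [Set.Finite.mem_toFinset] at this
    have hle : ∀ i, x (i+1) = c → i ≤ imax := fun i hi =>
      Finset.le_max' _ i (hP.1.mem_toFinset.mpr hi)
    have hcoord : ∀ i, i < imax → x (i+1) = T^[imax - 1 - i] (T c) := by
      intro i hi
      rw [coord_iter hx hi.le himax, ← Function.iterate_succ_apply, Nat.succ_eq_add_one,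
        show imax - 1 - i + 1 = imax - i by omega]
    set base : Bool → ℕ → Bool := fun b i =>
      if i < imax then f2b (kneading T c (imax - 1 - i))
      else if i = imax then b else decide (c < x (i + 1)) with hbase
    have hbase_allowed : ∀ b, Allowed T c x (base b) := by
      intro b
      constructor
      · intro i hne
        rcases Nat.lt_trichotomy i imax with h | h | h
        · simp only [hbase, if_pos h]
          rw [hcoord i h] at hne ⊢
          by_cases hq : Hq T c
          · rw [f2b_kneading_ne hq hne]
          · rw [f2b_kneading_ne' hq hne]
        · exact absurd (h ▸ himax) hne
        · simp only [hbase, if_neg (by omega : ¬ i < imax), if_neg (by omega : ¬ i = imax)]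
      · intro i j hij hi hj
        have hiimax : i < imax := lt_of_lt_of_le hij (hle j hj)
        have hq : Hq T c := hq_of_lt hx hij hi hj
        simp only [hbase, if_pos hiimax]
        apply f2b_kneading_eqc hq
        rw [← hcoord i hiimax]; exact hi
    have hs_eq : ∀ s, Allowed T c x s → s = base (s imax) := by
      intro s hs
      funext i
      rcases Nat.lt_trichotomy i imax with h | h | h
      · simp only [hbase, if_pos h]
        by_cases hic : x (i+1) = c
        · have hq : Hq T c := hq_of_lt hx h hic himax
          rw [hs.2 i imax h hic himax,
            f2b_kneading_eqc hq (by rw [← hcoord i h]; exact hic)]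
        · rw [hs.1 i hic]
          rw [hcoord i h] at hic ⊢
          by_cases hq : Hq T c
          · rw [f2b_kneading_ne hq hic]
          · rw [f2b_kneading_ne' hq hic]
      · subst h; simp only [hbase]; simp
      · have hic : x (i+1) ≠ c := fun hc' => absurd (hle i hc') (by omega)
        simp only [hbase, if_neg (by omega : ¬ i < imax), if_neg (by omega : ¬ i = imax)]
        exact hs.1 i hic
    unfold phiSet
    rw [dif_pos hP]
    show ({(x 0, psiL L (base false)), (x 0, psiL L (base true))} : Set (ℝ × ℝ)) = _
    ext p
    simp only [Set.mem_insert_iff, Set.mem_singleton_iff, Set.mem_setOf_eq]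
    constructor
    · rintro (rfl | rfl)
      · exact ⟨base false, hbase_allowed false, rfl⟩
      · exact ⟨base true, hbase_allowed true, rfl⟩
    · rintro ⟨s, hs, rfl⟩
      have heq := hs_eq s hs
      rcases Bool.dichotomy (s imax) with hb | hb
      · left; rw [heq, hb]
      · right; rw [heq, hb]
  · by_cases hInf : {i : ℕ | x (i + 1) = c}.Infinite
    · -- infinite case
      have hi0mem : sInf {i : ℕ | x (i + 1) = c} ∈ {i : ℕ | x (i + 1) = c} :=
        Nat.sInf_mem hInf.nonempty
      set i0 := sInf {i : ℕ | x (i + 1) = c} with hi0def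
      have hi0 : x (i0 + 1) = c := hi0mem
      have hqE : ∃ m, rawItin T c (T c) m = 1 := by
        obtain ⟨j, hj, hij⟩ := hInf.exists_gt i0
        exact hq_of_lt hx hij hi0 hj
      set n := Nat.find hqE + 1 with hn
      have hn0 : 0 < n := by omega
      have hcast : ∀ i : ℕ, (((((i0:ℤ) - i - 1) % (n:ℤ)).toNat : ℤ)) = ((i0:ℤ) - i - 1) % (n:ℤ) :=
        fun i => Int.toNat_of_nonneg (Int.emod_nonneg _ (by exact_mod_cast hn0.ne'))
      have hrlt : ∀ i : ℕ, ((((i0:ℤ) - i - 1) % (n:ℤ)).toNat) < n := by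
        intro i
        have h2 : ((i0:ℤ) - i - 1) % (n:ℤ) < (n:ℤ) := Int.emod_lt_of_pos _ (by exact_mod_cast hn0)
        have h3 := hcast i
        omega
      have hcoord : ∀ i : ℕ, x (i+1) = T^[((((i0:ℤ) - i - 1) % (n:ℤ)).toNat)] (T c) := by
        intro i
        obtain ⟨j, hjmem, hji⟩ := hInf.exists_gt i
        have hij : i ≤ j := hji.le
        have hi0j : i0 ≤ j := Nat.sInf_le hjmem
        have hdvd : (j - i0) % n = 0 := by
          rcases Nat.eq_or_lt_of_le hi0j with h | h
          · rw [← h]; simp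
          · have h4 := coord_iter hx hi0j hjmem
            rw [hi0] at h4
            exact (iter_c_eq_iff hqE).mp h4.symm
        set r : ℕ := (((i0:ℤ) - i - 1) % (n:ℤ)).toNat with hr
        have hzdvd : (n:ℤ) ∣ ((j:ℤ) - (i0:ℤ)) := by
          have hc2 : ((j - i0 : ℕ) : ℤ) = (j:ℤ) - (i0:ℤ) := by omega
          rw [← hc2]
          exact_mod_cast Nat.dvd_of_mod_eq_zero hdvd
        have hmodeq : ((j:ℤ) - i) % (n:ℤ) = ((r:ℤ) + 1) % (n:ℤ) := by
          have h1 : ((j:ℤ) - i) % (n:ℤ) = ((i0:ℤ) - i) % (n:ℤ) := by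
            apply Int.ModEq.symm
            apply Int.modEq_iff_dvd.mpr
            have h5 : ((j:ℤ) - i) - ((i0:ℤ) - i) = (j:ℤ) - i0 := by ring
            rw [h5]; exact hzdvd
          have h2 : ((r:ℤ) + 1) % (n:ℤ) = ((i0:ℤ) - i) % (n:ℤ) := by
            rw [hr, hcast i, Int.emod_add_emod]
            congr 1; ring
          rw [h1, h2]
        have hnat : (j - i) % n = (r + 1) % n := by
          have hcj : ((j - i : ℕ) : ℤ) = (j:ℤ) - (i:ℤ) := by omega
          have h4 : ((j - i : ℕ) : ℤ) % (n:ℤ) = ((r + 1 : ℕ) : ℤ) % (n:ℤ) := by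
            rw [hcj]; push_cast; exact hmodeq
          rw [← Int.natCast_mod, ← Int.natCast_mod] at h4
          exact_mod_cast h4
        calc x (i+1) = T^[j-i] c := coord_iter hx hij hjmem
          _ = T^[(j-i) % n] c := iter_c_mod hqE _
          _ = T^[(r+1) % n] c := by rw [hnat]
          _ = T^[r+1] c := (iter_c_mod hqE _).symm
          _ = T^[r] (T c) := Function.iterate_succ_apply _ _ _
      have hceq : ∀ i : ℕ, (x (i+1) = c ↔ ((((i0:ℤ) - i - 1) % (n:ℤ)).toNat) = Nat.find hqE) := by
        intro i
        rw [hcoord i, ← rawItin_eq_one_iff, raw_one_iff hqE]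
        constructor
        · intro h; rw [Nat.mod_eq_of_lt (hrlt i)] at h; exact h
        · intro h; rw [Nat.mod_eq_of_lt (hrlt i)]; exact h
      set σ : ℕ → Bool := fun i => f2b (kneading T c ((((i0:ℤ) - i - 1) % (n:ℤ)).toNat)) with hσ
      have hσ_allowed : Allowed T c x σ := by
        constructor
        · intro i hne
          have hne' : T^[((((i0:ℤ) - i - 1) % (n:ℤ)).toNat)] (T c) ≠ c := by
            rw [← hcoord i]; exact hne
          simp only [hσ]
          rw [f2b_kneading_ne hqE hne', ← hcoord i]
        · intro i j hij hi hj
          simp only [hσ]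
          exact f2b_kneading_eqc hqE (by rw [← hcoord i]; exact hi)
      have hs_eq : ∀ s, Allowed T c x s → s = σ := by
        intro s hs
        funext i
        by_cases hic : x (i+1) = c
        · obtain ⟨j, hjmem, hji⟩ := hInf.exists_gt i
          rw [hs.2 i j hji hic hjmem]
          simp only [hσ]
          rw [f2b_kneading_eqc hqE (by rw [← hcoord i]; exact hic)]
        · rw [hs.1 i hic]
          have hne' : T^[((((i0:ℤ) - i - 1) % (n:ℤ)).toNat)] (T c) ≠ c := by
            rw [← hcoord i]; exact hic
          simp only [hσ]
          rw [f2b_kneading_ne hqE hne', ← hcoord i]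
      unfold phiSet
      rw [dif_neg hP, if_pos hInf, dif_pos hqE]
      show ({(x 0, psiL L σ)} : Set (ℝ × ℝ)) = _
      ext p
      simp only [Set.mem_singleton_iff, Set.mem_setOf_eq]
      constructor
      · rintro rfl
        exact ⟨σ, hσ_allowed, rfl⟩
      · rintro ⟨s, hs, rfl⟩
        rw [hs_eq s hs]
    · -- no coordinate equals c
      have hfin : {i : ℕ | x (i + 1) = c}.Finite := Set.not_infinite.mp hInf
      have hnone : ∀ i, x (i+1) ≠ c := by
        intro i hi
        exact hP ⟨hfin, ⟨i, hi⟩⟩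
      unfold phiSet
      rw [dif_neg hP, if_neg hInf]
      ext p
      simp only [Set.mem_singleton_iff, Set.mem_setOf_eq]
      constructor
      · rintro rfl
        refine ⟨fun i => decide (c < x (i+1)), ⟨fun i _ => rfl, fun i j _ hi _ => absurd hi (hnone i)⟩, rfl⟩
      · rintro ⟨s, hs, rfl⟩
        have : s = fun i => decide (c < x (i+1)) := funext fun i => hs.1 i (hnone i)
        rw [this]

lemma allowed_nonempty (x : ℕ → ℝ) :
    Allowed T c x (fun i => if x (i+1) = c then bstarB T c else decide (c < x (i+1))) := by
  constructor
  · intro i hne; simp [hne]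
  · intro i j hij hi hj; simp [hi]

end Char
section Side
variable {T : ℝ → ℝ} {c : ℝ}

lemma onesCount_succ (s : ℕ → Fin 3) (k : ℕ) :
    onesCount s (k+1) = onesCount s k + (if s k = 2 then 1 else 0) := by
  unfold onesCount
  rw [Finset.range_add_one, Finset.filter_insert]
  split_ifs with h
  · rw [Finset.card_insert_of_notMem (by simp)]
  · rfl

variable (hT : IsUnimodal T c) (hq : Hq T c)
include hT hq

lemma mono_comp : ∀ k, k ≤ Nat.find hq → ∃ η > 0, η ≤ T c ∧
    ∀ w₁ ∈ Icc (T c - η) (T c), ∀ w₂ ∈ Icc (T c - η) (T c), w₁ < w₂ →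
      T^[k] w₁ ∈ Icc (0:ℝ) 1 ∧ T^[k] w₂ ∈ Icc (0:ℝ) 1 ∧
      (Even (onesCount (rawItin T c (T c)) k) → T^[k] w₁ < T^[k] w₂) ∧
      (¬ Even (onesCount (rawItin T c (T c)) k) → T^[k] w₂ < T^[k] w₁) := by
  intro k
  induction k with
  | zero =>
      intro _
      refine ⟨T c, Tc_pos hT, le_refl _, ?_⟩
      intro w₁ hw₁ w₂ hw₂ hlt
      simp only [Function.iterate_zero_apply]
      have hTc1 : T c ≤ 1 := (Tc_mem hT).2
      refine ⟨⟨by linarith [hw₁.1], by linarith [hw₁.2]⟩,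
        ⟨by linarith [hw₂.1], by linarith [hw₂.2]⟩, fun _ => hlt, fun h => ?_⟩
      exact absurd (by simp [onesCount] : Even (onesCount (rawItin T c (T c)) 0)) h
  | succ k ih =>
      intro hk
      obtain ⟨η, hη0, hηTc, hmono⟩ := ih (by omega)
      have hy_ne : T^[k] (T c) ≠ c := by
        intro h
        exact Nat.find_min hq (by omega) (rawItin_eq_one_iff.mpr h)
      have hy_mem : T^[k] (T c) ∈ Icc (0:ℝ) 1 := iter_mem hT (Tc_mem hT) k
      have hcw : ContinuousWithinAt (T^[k]) (Icc 0 1) (T c) :=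
        (contOn_iter hT k) (T c) (Tc_mem hT)
      rw [Metric.continuousWithinAt_iff] at hcw
      obtain ⟨δ, hδ0, hδ⟩ := hcw (|T^[k] (T c) - c|) (abs_pos.mpr (sub_ne_zero.mpr hy_ne))
      set η' := min η (δ/2) with hη'
      have hη'0 : 0 < η' := lt_min hη0 (by linarith)
      refine ⟨η', hη'0, le_trans (min_le_left _ _) hηTc, ?_⟩
      intro w₁ hw₁ w₂ hw₂ hlt
      have hminl := min_le_left η (δ/2)
      have hminr := min_le_right η (δ/2)
      have hsub : Icc (T c - η') (T c) ⊆ Icc (T c - η) (T c) :=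
        Icc_subset_Icc (by linarith) (le_refl _)
      have h01 : Icc (T c - η') (T c) ⊆ Icc (0:ℝ) 1 := by
        intro w hw
        exact ⟨by linarith [hw.1, hηTc], by linarith [hw.2, (Tc_mem hT).2]⟩
      have hside : ∀ w ∈ Icc (T c - η') (T c), |T^[k] w - T^[k] (T c)| < |T^[k] (T c) - c| := by
        intro w hw
        have hd : dist w (T c) < δ := by
          rw [Real.dist_eq, abs_lt]
          exact ⟨by linarith [hw.1], by linarith [hw.2]⟩
        have := hδ (h01 hw) hd
        rwa [Real.dist_eq] at this
      obtain ⟨hm1, hm2, heven, hodd⟩ := hmono w₁ (hsub hw₁) w₂ (hsub hw₂) hlt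
      have hmem1 : T^[k+1] w₁ ∈ Icc (0:ℝ) 1 := iter_mem hT (h01 hw₁) (k+1)
      have hmem2 : T^[k+1] w₂ ∈ Icc (0:ℝ) 1 := iter_mem hT (h01 hw₂) (k+1)
      have hcnt := onesCount_succ (rawItin T c (T c)) k
      rcases lt_or_gt_of_ne hy_ne with hy | hy
      · -- T^[k] (T c) < c : same parity, next map increasing
        have hraw : rawItin T c (T c) k ≠ 2 := fun h =>
          absurd (rawItin_eq_two_iff.mp h) (by linarith)
        have hcnt' : onesCount (rawItin T c (T c)) (k+1) = onesCount (rawItin T c (T c)) k := by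
          rw [hcnt, if_neg hraw]; ring
        have habs : |T^[k] (T c) - c| = c - T^[k] (T c) := by
          rw [abs_of_neg (by linarith : T^[k] (T c) - c < 0)]; ring
        have hu1 : T^[k] w₁ ∈ Icc (0:ℝ) c := by
          have h := hside w₁ hw₁; rw [habs, abs_lt] at h
          exact ⟨hm1.1, by linarith [h.2]⟩
        have hu2 : T^[k] w₂ ∈ Icc (0:ℝ) c := by
          have h := hside w₂ hw₂; rw [habs, abs_lt] at h
          exact ⟨hm2.1, by linarith [h.2]⟩
        refine ⟨hmem1, hmem2, fun hev => ?_, fun hnev => ?_⟩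
        · rw [Function.iterate_succ_apply', Function.iterate_succ_apply']
          exact hT.2.2.2.2.2.1 hu1 hu2 (heven (by rwa [hcnt'] at hev))
        · rw [Function.iterate_succ_apply', Function.iterate_succ_apply']
          exact hT.2.2.2.2.2.1 hu2 hu1 (hodd (by rwa [hcnt'] at hnev))
      · -- T^[k] (T c) > c : parity flips, next map decreasing
        have hraw : rawItin T c (T c) k = 2 := rawItin_eq_two_iff.mpr hy
        have hcnt' : onesCount (rawItin T c (T c)) (k+1) = onesCount (rawItin T c (T c)) k + 1 := by
          rw [hcnt, if_pos hraw]
        have habs : |T^[k] (T c) - c| = T^[k] (T c) - c := abs_of_pos (by linarith)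
        have hu1 : T^[k] w₁ ∈ Icc c (1:ℝ) := by
          have h := hside w₁ hw₁; rw [habs, abs_lt] at h
          exact ⟨by linarith [h.1], hm1.2⟩
        have hu2 : T^[k] w₂ ∈ Icc c (1:ℝ) := by
          have h := hside w₂ hw₂; rw [habs, abs_lt] at h
          exact ⟨by linarith [h.1], hm2.2⟩
        refine ⟨hmem1, hmem2, fun hev => ?_, fun hnev => ?_⟩
        · rw [Function.iterate_succ_apply', Function.iterate_succ_apply']
          have hoddk : ¬ Even (onesCount (rawItin T c (T c)) k) := by
            rw [hcnt', Nat.even_add_one] at hev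
            exact hev
          exact hT.2.2.2.2.2.2 hu2 hu1 (hodd hoddk)
        · rw [Function.iterate_succ_apply', Function.iterate_succ_apply']
          have hevk : Even (onesCount (rawItin T c (T c)) k) := by
            rw [hcnt', Nat.even_add_one, not_not] at hnev
            exact hnev
          exact hT.2.2.2.2.2.2 hu1 hu2 (heven hevk)

lemma side_lemma : ∀ ε > 0, ∃ δ > 0, ∀ z ∈ Icc (0:ℝ) 1, z ≠ c → |z - c| < δ →
    T^[Nat.find hq + 1] z ∈ Icc (0:ℝ) 1 ∧ T^[Nat.find hq + 1] z ≠ c ∧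
    ((c < T^[Nat.find hq + 1] z) ↔ bstarB T c = true) ∧ |T^[Nat.find hq + 1] z - c| < ε := by
  intro ε hε
  obtain ⟨η, hη0, hηTc, hmono⟩ := mono_comp hT hq (Nat.find hq) (le_refl _)
  -- continuity of T at c
  have hcT : ContinuousWithinAt T (Icc 0 1) c := hT.1 c (hcmem hT)
  rw [Metric.continuousWithinAt_iff] at hcT
  obtain ⟨δ₁, hδ₁0, hδ₁⟩ := hcT η hη0
  -- continuity of T^[n] at c, where T^[n] c = c
  have hcn : ContinuousWithinAt (T^[Nat.find hq + 1]) (Icc 0 1) c :=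
    (contOn_iter hT (Nat.find hq + 1)) c (hcmem hT)
  rw [Metric.continuousWithinAt_iff] at hcn
  obtain ⟨δ₂, hδ₂0, hδ₂⟩ := hcn ε hε
  refine ⟨min δ₁ δ₂, lt_min hδ₁0 hδ₂0, ?_⟩
  intro z hz hzne hzδ
  have hd1 : dist z c < δ₁ := by rw [Real.dist_eq]; exact lt_of_lt_of_le hzδ (min_le_left _ _)
  have hd2 : dist z c < δ₂ := by rw [Real.dist_eq]; exact lt_of_lt_of_le hzδ (min_le_right _ _)
  have hTz_lt : T z < T c := T_lt_Tc hT hz hzne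
  have hTz_ge : T c - η ≤ T z := by
    have := hδ₁ hz hd1
    rw [Real.dist_eq, abs_lt] at this
    linarith [this.1]
  have hTz_mem : T z ∈ Icc (T c - η) (T c) := ⟨hTz_ge, hTz_lt.le⟩
  have hTc_mem' : T c ∈ Icc (T c - η) (T c) := ⟨by linarith, le_refl _⟩
  obtain ⟨hm1, _, heven, hodd⟩ := hmono (T z) hTz_mem (T c) hTc_mem' hTz_lt
  have hfTc : T^[Nat.find hq] (T c) = c := iter_find hq
  have hiter : T^[Nat.find hq + 1] z = T^[Nat.find hq] (T z) := Function.iterate_succ_apply _ _ _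
  have hmem : T^[Nat.find hq + 1] z ∈ Icc (0:ℝ) 1 := iter_mem hT hz _
  have hdist : |T^[Nat.find hq + 1] z - c| < ε := by
    have h5 := hδ₂ hz hd2
    simp only [iter_n_c hq, Real.dist_eq] at h5
    exact h5
  rw [bstarB_eq hq]
  by_cases hev : Even (onesCount (rawItin T c (T c)) (Nat.find hq))
  · have hlt : T^[Nat.find hq + 1] z < c := by
      rw [hiter]
      have h6 := heven hev
      rwa [hfTc] at h6
    refine ⟨hmem, by linarith, ?_, hdist⟩
    simp [Nat.not_odd_iff_even.mpr hev]
    linarith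
  · have hlt : c < T^[Nat.find hq + 1] z := by
      rw [hiter]
      have h6 := hodd hev
      rwa [hfTc] at h6
    refine ⟨hmem, by linarith, ?_, hdist⟩
    simp [Nat.not_even_iff_odd.mp hev]
    linarith

lemma side_lemma_iter : ∀ m : ℕ, 0 < m → ∀ ε > 0, ∃ δ > 0, ∀ z ∈ Icc (0:ℝ) 1, z ≠ c →
    |z - c| < δ →
    T^[m * (Nat.find hq + 1)] z ∈ Icc (0:ℝ) 1 ∧ T^[m * (Nat.find hq + 1)] z ≠ c ∧
    ((c < T^[m * (Nat.find hq + 1)] z) ↔ bstarB T c = true) ∧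
    |T^[m * (Nat.find hq + 1)] z - c| < ε := by
  intro m
  induction m with
  | zero => omega
  | succ m ih =>
      intro _ ε hε
      rcases Nat.eq_zero_or_pos m with rfl | hm
      · obtain ⟨δ, hδ0, hδ⟩ := side_lemma hT hq ε hε
        exact ⟨δ, hδ0, fun z hz hzne hzδ => by
          simpa [one_mul] using hδ z hz hzne hzδ⟩
      · obtain ⟨δm, hδm0, hδm⟩ := ih hm ε hε
        obtain ⟨δ, hδ0, hδ⟩ := side_lemma hT hq δm hδm0
        refine ⟨δ, hδ0, ?_⟩
        intro z hz hzne hzδ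
        obtain ⟨hmem, hne, _, hd⟩ := hδ z hz hzne hzδ
        have := hδm (T^[Nat.find hq + 1] z) hmem hne hd
        have hmul : (m+1) * (Nat.find hq + 1) = m * (Nat.find hq + 1) + (Nat.find hq + 1) := by ring
        rw [hmul, Function.iterate_add_apply]
        exact this

end Side
section Assemble
variable {T : ℝ → ℝ} {c : ℝ}

lemma invLimit_closed (hT : IsUnimodal T c) : IsClosed (invLimitSet T) := by
  have hTc' : Continuous (fun z : ℝ => T ((projIcc (0:ℝ) 1 zero_le_one z) : ℝ)) := by
    apply hT.1.comp_continuous (continuous_subtype_val.comp continuous_projIcc)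
    intro z; exact (projIcc (0:ℝ) 1 zero_le_one z).2
  have heq : invLimitSet T = {x : ℕ → ℝ | ∀ n, x n ∈ Icc (0:ℝ) 1} ∩
      {x : ℕ → ℝ | ∀ n, T ((projIcc (0:ℝ) 1 zero_le_one (x (n+1))) : ℝ) = x n} := by
    ext x
    constructor
    · rintro ⟨h1, h2⟩
      refine ⟨h1, fun n => ?_⟩
      rw [projIcc_of_mem _ (h1 (n+1))]
      exact h2 n
    · rintro ⟨h1, h2⟩
      refine ⟨h1, fun n => ?_⟩
      have h3 := h2 n
      rwa [projIcc_of_mem _ (h1 (n+1))] at h3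
  rw [heq]
  apply IsClosed.inter
  · have h4 : {x : ℕ → ℝ | ∀ n, x n ∈ Icc (0:ℝ) 1} =
        ⋂ n, (fun x : ℕ → ℝ => x n) ⁻¹' (Icc 0 1) := by
      ext x; simp [Set.mem_iInter]
    rw [h4]
    exact isClosed_iInter fun n => isClosed_Icc.preimage (continuous_apply n)
  · have h4 : {x : ℕ → ℝ | ∀ n, T ((projIcc (0:ℝ) 1 zero_le_one (x (n+1))) : ℝ) = x n} =
        ⋂ n, {x : ℕ → ℝ | T ((projIcc (0:ℝ) 1 zero_le_one (x (n+1))) : ℝ) = x n} := by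
      ext x; simp [Set.mem_iInter]
    rw [h4]
    exact isClosed_iInter fun n =>
      isClosed_eq (hTc'.comp (continuous_apply (n+1))) (continuous_apply n)

/-- the graph of the allowed-itinerary correspondence -/
def KS (T : ℝ → ℝ) (c : ℝ) : Set ((ℕ → ℝ) × (ℕ → Bool)) :=
  {p | p.1 ∈ invLimitSet T ∧ Allowed T c p.1 p.2}

lemma S1_closed (i : ℕ) :
    IsClosed {p : (ℕ → ℝ) × (ℕ → Bool) | p.1 (i+1) ≠ c → p.2 i = decide (c < p.1 (i+1))} := by
  rw [← isOpen_compl_iff]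
  have hco : {p : (ℕ → ℝ) × (ℕ → Bool) | p.1 (i+1) ≠ c → p.2 i = decide (c < p.1 (i+1))}ᶜ =
      (((fun p : (ℕ → ℝ) × (ℕ → Bool) => p.1 (i+1)) ⁻¹' (Iio c)) ∩
        ((fun p : (ℕ → ℝ) × (ℕ → Bool) => p.2 i) ⁻¹' {true})) ∪
      (((fun p : (ℕ → ℝ) × (ℕ → Bool) => p.1 (i+1)) ⁻¹' (Ioi c)) ∩
        ((fun p : (ℕ → ℝ) × (ℕ → Bool) => p.2 i) ⁻¹' {false})) := by
    ext p
    simp only [Set.mem_compl_iff, Set.mem_setOf_eq, Classical.not_imp, Set.mem_union,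
      Set.mem_inter_iff, Set.mem_preimage, Set.mem_Iio, Set.mem_Ioi, Set.mem_singleton_iff]
    constructor
    · rintro ⟨hne, hsb⟩
      rcases lt_or_gt_of_ne hne with h | h
      · left
        refine ⟨h, ?_⟩
        rw [decide_eq_false (asymm h)] at hsb
        exact Bool.ne_false_iff.mp hsb
      · right
        refine ⟨h, ?_⟩
        rw [decide_eq_true h] at hsb
        rcases Bool.dichotomy (p.2 i) with hb | hb
        · exact hb
        · exact absurd hb hsb
    · rintro (⟨h, hb⟩ | ⟨h, hb⟩)
      · exact ⟨h.ne, by rw [hb, decide_eq_false (asymm h)]; simp⟩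
      · exact ⟨h.ne', by rw [hb, decide_eq_true h]; simp⟩
  rw [hco]
  have h1 : Continuous (fun p : (ℕ → ℝ) × (ℕ → Bool) => p.1 (i+1)) :=
    (continuous_apply (i+1)).comp continuous_fst
  have h2 : Continuous (fun p : (ℕ → ℝ) × (ℕ → Bool) => p.2 i) :=
    (continuous_apply i).comp continuous_snd
  exact ((isOpen_Iio.preimage h1).inter ((isOpen_discrete _).preimage h2)).union
    ((isOpen_Ioi.preimage h1).inter ((isOpen_discrete _).preimage h2))

lemma KS_closed (hT : IsUnimodal T c) : IsClosed (KS T c) := by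
  -- the closed part
  set S0 : Set ((ℕ → ℝ) × (ℕ → Bool)) :=
    {p | p.1 ∈ invLimitSet T} ∩ ⋂ i, {p | p.1 (i+1) ≠ c → p.2 i = decide (c < p.1 (i+1))}
    with hS0
  have hS0closed : IsClosed S0 :=
    ((invLimit_closed hT).preimage continuous_fst).inter (isClosed_iInter S1_closed)
  have hKS_sub : KS T c ⊆ S0 := by
    rintro p ⟨hx, hA1, _⟩
    exact ⟨hx, Set.mem_iInter.mpr fun i => Set.mem_setOf_eq ▸ hA1 i⟩
  have hclosure : closure (KS T c) ⊆ KS T c := by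
    intro p hp
    have hpS0 : p ∈ S0 := by
      have h7 := closure_mono hKS_sub hp
      rwa [hS0closed.closure_eq] at h7
    have hx : p.1 ∈ invLimitSet T := hpS0.1
    have hA1 : ∀ i, p.1 (i+1) ≠ c → p.2 i = decide (c < p.1 (i+1)) := fun i =>
      Set.mem_iInter.mp hpS0.2 i
    refine ⟨hx, hA1, ?_⟩
    intro i j hij hi hj
    have hq : Hq T c := hq_of_lt hx hij hi hj
    have hmod : (j - i) % (Nat.find hq + 1) = 0 := by
      apply (iter_c_eq_iff hq).mp
      rw [← coord_iter hx hij.le hj]; exact hi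
    set n := Nat.find hq + 1 with hn
    set m := (j - i) / n with hm
    have hmn : m * n = j - i := Nat.div_mul_cancel (Nat.dvd_of_mod_eq_zero hmod)
    have hm0 : 0 < m := by
      rcases Nat.eq_zero_or_pos m with h | h
      · rw [h] at hmn; omega
      · exact h
    obtain ⟨δ, hδ0, hδ⟩ := side_lemma_iter hT hq m hm0 1 one_pos
    set U : Set ((ℕ → ℝ) × (ℕ → Bool)) :=
      ((fun q : (ℕ → ℝ) × (ℕ → Bool) => q.1 (j+1)) ⁻¹' (Metric.ball c δ)) ∩
      ((fun q : (ℕ → ℝ) × (ℕ → Bool) => q.2 i) ⁻¹' {p.2 i}) with hU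
    have hUopen : IsOpen U :=
      (Metric.isOpen_ball.preimage ((continuous_apply (j+1)).comp continuous_fst)).inter
        ((isOpen_discrete _).preimage ((continuous_apply i).comp continuous_snd))
    have hpU : p ∈ U := by
      constructor
      · show p.1 (j+1) ∈ Metric.ball c δ
        rw [Metric.mem_ball, hj]
        simpa using hδ0
      · rfl
    obtain ⟨q, hqU, hqKS⟩ := mem_closure_iff.mp hp U hUopen hpU
    have hpq : p.2 i = q.2 i := (hqU.2 : q.2 i = p.2 i).symm
    rw [hpq]
    by_cases hc1 : q.1 (j+1) = c
    · by_cases hc2 : q.1 (i+1) = c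
      · exact hqKS.2.2 i j hij hc2 hc1
      · exfalso
        apply hc2
        have h9 : T^[j-i] c = c := by rw [← coord_iter hx hij.le hj]; exact hi
        rw [coord_iter hqKS.1 hij.le hc1]
        exact h9
    · have hq1mem : q.1 (j+1) ∈ Icc (0:ℝ) 1 := hqKS.1.1 (j+1)
      have hqd : |q.1 (j+1) - c| < δ := by
        have h10 := hqU.1
        rwa [Set.mem_preimage, Metric.mem_ball, Real.dist_eq] at h10
      obtain ⟨_, hne, hiff, _⟩ := hδ (q.1 (j+1)) hq1mem hc1 hqd
      have hco : q.1 (i+1) = T^[m*n] (q.1 (j+1)) := by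
        have h8 := inv_iter hqKS.1 (i+1) (j-i)
        rw [show i+1+(j-i) = j+1 by omega] at h8
        rw [h8, hmn]
      have hne' : q.1 (i+1) ≠ c := by rw [hco]; exact hne
      rw [hqKS.2.1 i hne']
      rcases Bool.dichotomy (bstarB T c) with hb | hb
      · rw [hb]
        apply decide_eq_false
        intro hlt
        rw [hco] at hlt
        rw [hb] at hiff
        simpa using hiff.mp hlt
      · rw [hb]
        apply decide_eq_true
        rw [hco]
        exact hiff.mpr hb
  exact isClosed_of_closure_subset hclosure

end Assemble
section Final
variable {T : ℝ → ℝ} {c : ℝ}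

lemma KS_compact (hT : IsUnimodal T c) : IsCompact (KS T c) := by
  apply IsCompact.of_isClosed_subset
    ((isCompact_univ_pi (fun _ : ℕ => isCompact_Icc)).prod isCompact_univ)
    (KS_closed hT)
  rintro p ⟨hx, _⟩
  exact ⟨Set.mem_univ_pi.mpr (fun n => hx.1 n), Set.mem_univ _⟩

lemma phiImage_eq (L : ℕ → Bool) :
    phiImage T c L = (fun p : (ℕ → ℝ) × (ℕ → Bool) => (p.1 0, psiL L p.2)) '' (KS T c) := by
  ext a
  simp only [phiImage, Set.mem_iUnion, Set.mem_image]
  constructor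
  · rintro ⟨x, hx, ha⟩
    rw [phiSet_eq L hx] at ha
    obtain ⟨s, hs, rfl⟩ := ha
    exact ⟨(x, s), ⟨hx, hs⟩, rfl⟩
  · rintro ⟨⟨x, s⟩, ⟨hx, hs⟩, rfl⟩
    exact ⟨x, hx, by rw [phiSet_eq L hx]; exact ⟨s, hs, rfl⟩⟩

lemma phiImage_compact (hT : IsUnimodal T c) (L : ℕ → Bool) :
    IsCompact (phiImage T c L) := by
  rw [phiImage_eq L]
  apply (KS_compact hT).image
  exact ((continuous_apply 0).comp continuous_fst).prodMk
    ((continuous_psiL L).comp continuous_snd)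

end Final
end Stmt18

open Stmt18 Topology Set Function

/-- The map `φ : X → Y/∼` is a homeomorphism: there is a homeomorphism
`Φ : X ≃ₜ Y/∼` sending each `x ∈ X` to the `∼`-class of (any element of) `φ(x)`. -/
theorem stmt18 (T : ℝ → ℝ) (c : ℝ) (hT : IsUnimodal T c) (L : ℕ → Bool) :
    ∃ Φ : ↥(invLimitSet T) ≃ₜ Quot (phiRel T c L),
      ∀ (x : ↥(invLimitSet T)) (a : ↥(phiImage T c L)),
        (a : ℝ × ℝ) ∈ phiSet T c L (x : ℕ → ℝ) → Φ x = Quot.mk _ a := by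
  classical
  have hKSc : IsCompact (KS T c) := KS_compact hT
  haveI hKS : CompactSpace ↥(KS T c) := isCompact_iff_compactSpace.mp hKSc
  haveI hYc : CompactSpace ↥(phiImage T c L) :=
    isCompact_iff_compactSpace.mp (phiImage_compact hT L)
  set F : (ℕ → ℝ) × (ℕ → Bool) → ℝ × ℝ := fun p => (p.1 0, psiL L p.2) with hF
  have hFc : Continuous F := ((continuous_apply 0).comp continuous_fst).prodMk
    ((continuous_psiL L).comp continuous_snd)
  have hmemY : ∀ k : ↥(KS T c), F k.1 ∈ phiImage T c L := by
    intro k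
    rw [phiImage_eq L]
    exact ⟨k.1, k.2, rfl⟩
  set q2 : ↥(KS T c) → ↥(phiImage T c L) := fun k => ⟨F k.1, hmemY k⟩ with hq2def
  have hq2c : Continuous q2 := Continuous.subtype_mk (hFc.comp continuous_subtype_val) _
  have hq2surj : Function.Surjective q2 := by
    rintro ⟨a, ha⟩
    rw [phiImage_eq L] at ha
    obtain ⟨p, hp, hpa⟩ := ha
    exact ⟨⟨p, hp⟩, Subtype.ext hpa⟩
  have hx_of : ∀ k : ↥(KS T c), ∀ n, k.1.1 n = R hT (k.1.1 0, k.1.2) n := by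
    intro k n
    exact (R_recover hT k.2.1 k.2.2.1 n).symm
  have hinj : ∀ k k' : ↥(KS T c), q2 k = q2 k' → k.1.1 = k'.1.1 := by
    intro k k' h
    have h0 : F k.1 = F k'.1 := congrArg Subtype.val h
    have h1 : k.1.1 0 = k'.1.1 0 := congrArg Prod.fst h0
    have h2 : psiL L k.1.2 = psiL L k'.1.2 := congrArg Prod.snd h0
    have h3 : k.1.2 = k'.1.2 := psiL_injective L h2
    funext n
    rw [hx_of k n, hx_of k' n, h1, h3]
  have hq2quot : IsQuotientMap q2 := (hq2c.isClosedMap).isQuotientMap hq2c hq2surj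
  set pX : ↥(KS T c) → ↥(invLimitSet T) := fun k => ⟨k.1.1, k.2.1⟩ with hpX
  have hpXc : Continuous pX :=
    Continuous.subtype_mk (continuous_fst.comp continuous_subtype_val) _
  set G : ↥(phiImage T c L) → ↥(invLimitSet T) :=
    fun a => pX (Classical.choose (hq2surj a)) with hG
  have hGspec : ∀ k : ↥(KS T c), G (q2 k) = pX k := by
    intro k
    have h := Classical.choose_spec (hq2surj (q2 k))
    exact Subtype.ext (hinj _ _ h)
  have hGc : Continuous G := by
    rw [hq2quot.continuous_iff]
    have hcomp : G ∘ q2 = pX := funext hGspec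
    rw [hcomp]
    exact hpXc
  have hGphi : ∀ (a : ↥(phiImage T c L)) (x : ℕ → ℝ), x ∈ invLimitSet T →
      (a : ℝ × ℝ) ∈ phiSet T c L x → (G a : ℕ → ℝ) = x := by
    intro a x hx ha
    rw [phiSet_eq L hx] at ha
    obtain ⟨s, hs, hsa⟩ := ha
    have hk : q2 ⟨(x, s), hx, hs⟩ = a := Subtype.ext hsa.symm
    rw [← hk, hGspec]
  have hGrel : ∀ a b : ↥(phiImage T c L), phiRel T c L a b → G a = G b := by
    rintro a b ⟨x, hx, ha, hb⟩
    exact Subtype.ext ((hGphi a x hx ha).trans (hGphi b x hx hb).symm)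
  set Gbar : Quot (phiRel T c L) → ↥(invLimitSet T) := Quot.lift G hGrel with hGbar
  have hGbarc : Continuous Gbar := continuous_quot_lift _ hGc
  have hmemself : ∀ a : ↥(phiImage T c L), (a : ℝ × ℝ) ∈ phiSet T c L (G a : ℕ → ℝ) := by
    intro a
    obtain ⟨x, hx, ha⟩ := Set.mem_iUnion₂.mp a.2
    have h := hGphi a x hx ha
    rw [h]
    exact ha
  have hGbar_bij : Function.Bijective Gbar := by
    constructor
    · intro qa qb h
      obtain ⟨a, rfl⟩ := Quot.exists_rep qa
      obtain ⟨b, rfl⟩ := Quot.exists_rep qb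
      apply Quot.sound
      refine ⟨(G a : ℕ → ℝ), (G a).2, hmemself a, ?_⟩
      have hab : G a = G b := h
      rw [show ((G a : ℕ → ℝ)) = ((G b : ℕ → ℝ)) from congrArg _ hab]
      exact hmemself b
    · intro x
      set s : ℕ → Bool := fun i => if x.1 (i+1) = c then bstarB T c
        else decide (c < x.1 (i+1)) with hs
      have hall : Allowed T c x.1 s := allowed_nonempty x.1
      have hmem : ((x.1 0, psiL L s) : ℝ × ℝ) ∈ phiImage T c L := by
        rw [phiImage_eq L]
        exact ⟨(x.1, s), ⟨x.2, hall⟩, rfl⟩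
      refine ⟨Quot.mk _ ⟨(x.1 0, psiL L s), hmem⟩, ?_⟩
      show G _ = x
      apply Subtype.ext
      apply hGphi _ x.1 x.2
      rw [phiSet_eq L x.2]
      exact ⟨s, hall, rfl⟩
  haveI : CompactSpace (Quot (phiRel T c L)) := by
    constructor
    have h1 : (Set.univ : Set (Quot (phiRel T c L))) = Quot.mk _ '' Set.univ := by
      ext q
      simp only [Set.image_univ, Set.mem_univ, true_iff, Set.mem_range]
      exact Quot.exists_rep q
    rw [h1]
    exact isCompact_univ.image continuous_quot_mk
  set E : Quot (phiRel T c L) ≃ ↥(invLimitSet T) := Equiv.ofBijective Gbar hGbar_bij with hE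
  have hEc : Continuous E := hGbarc
  set homeo : Quot (phiRel T c L) ≃ₜ ↥(invLimitSet T) :=
    Continuous.homeoOfEquivCompactToT2 (f := E) hEc with hhomeo
  refine ⟨homeo.symm, ?_⟩
  intro x a ha
  have h1 : G a = x := Subtype.ext (hGphi a x.1 x.2 ha)
  have h2 : homeo (Quot.mk _ a) = x := h1
  rw [← h2, Homeomorph.symm_apply_apply]
end
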